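/- For $a > 0$ and dimension $d \geq 1$, let $G = \{z \in \mathbb{R}^d : |z^{(i)}| < a \text{ for all } i \geq 2\}$. Let $f: G \to [0,U]$ be Lebesgue measurable with $\int_G f(x)\,dx = E \in (0,\infty)$. Then for any $b \in \mathbb{R}$, $\int_G (x^{(1)} - b)^2 f(x)\,dx \geq \frac{E^3}{12 U^2 (2a)^{2(d-1)}}$, with equality if and only if $f = U \mathbf{1}_{G_1}$ a.e. on $G$, where $G_1 = [b - \frac{E}{2U(2a)^{d-1}}, b + \frac{E}{2U(2a)^{d-1}}] \times (-a,a)^{d-1}$. -/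

import Mathlib

open MeasureTheory

private lemma moment1d (b r : ℝ) (hr : 0 ≤ r) :
    ∫⁻ t in Set.Icc (b - r) (b + r), ENNReal.ofReal ((t - b) ^ 2) =
      ENNReal.ofReal (2 / 3 * r ^ 3) := by
  rw [← ofReal_integral_eq_lintegral_ofReal]
  · congr 1
    rw [integral_Icc_eq_integral_Ioc,
      ← intervalIntegral.integral_of_le (by linarith : b - r ≤ b + r),
      intervalIntegral.integral_comp_sub_right (fun t => t ^ 2) b]
    rw [integral_pow]
    ring_nf
  · exact ((continuous_id.sub continuous_const).pow 2).integrableOn_Icc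
  · filter_upwards with t using sq_nonneg _

/-- Slab version of the extremal second-moment bound: for measurable `f : G → [0,U]`
with mass `E` on the slab `G = {z : |z⁽ⁱ⁾| < a, ∀ i ≥ 2}`, the second moment of the
first coordinate about `b` is at least `E³/(12U²(2a)^{2(d-1)})`, with equality iff
`f = U·1_{G₁}` a.e. on `G`, where `G₁` is the box
`[b - E/(2U(2a)^{d-1}), b + E/(2U(2a)^{d-1})] × (-a,a)^{d-1}`. -/
theorem stmt_12 (d : ℕ) (hd : 0 < d) (a U E b : ℝ) (ha : 0 < a) (hU : 0 < U) (hE : 0 < E)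
    (f : EuclideanSpace ℝ (Fin d) → ℝ) (hf : Measurable f)
    (G : Set (EuclideanSpace ℝ (Fin d)))
    (hG : G = {z : EuclideanSpace ℝ (Fin d) | ∀ i : Fin d, i ≠ ⟨0, hd⟩ → |z i| < a})
    (hf0 : ∀ x ∈ G, 0 ≤ f x) (hfU : ∀ x ∈ G, f x ≤ U)
    (hmass : ∫⁻ x in G, ENNReal.ofReal (f x) ∂volume = ENNReal.ofReal E) :
    ENNReal.ofReal (E ^ 3 / (12 * U ^ 2 * (2 * a) ^ (2 * (d - 1)))) ≤
        ∫⁻ x in G, ENNReal.ofReal ((x ⟨0, hd⟩ - b) ^ 2 * f x) ∂volume ∧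
      ((∫⁻ x in G, ENNReal.ofReal ((x ⟨0, hd⟩ - b) ^ 2 * f x) ∂volume)
            = ENNReal.ofReal (E ^ 3 / (12 * U ^ 2 * (2 * a) ^ (2 * (d - 1)))) ↔
        f =ᵐ[volume.restrict G]
          ({z : EuclideanSpace ℝ (Fin d) |
              z ⟨0, hd⟩ ∈ Set.Icc (b - E / (2 * U * (2 * a) ^ (d - 1)))
                  (b + E / (2 * U * (2 * a) ^ (d - 1))) ∧
              ∀ i : Fin d, i ≠ ⟨0, hd⟩ → |z i| < a}).indicator fun _ => U) := by
  obtain ⟨n, rfl⟩ : ∃ n, d = n + 1 := ⟨d - 1, (Nat.succ_pred_eq_of_pos hd).symm⟩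
  simp only [Nat.add_sub_cancel] at hG ⊢
  simp only [show (⟨0, hd⟩ : Fin (n + 1)) = 0 from rfl] at hG ⊢
  set P : ℝ := (2 * a) ^ n with hPdef
  have hP : 0 < P := pow_pos (by linarith) n
  set r : ℝ := E / (2 * U * P) with hrdef
  have hr : 0 < r := div_pos hE (by positivity)
  set I : Set ℝ := Set.Icc (b - r) (b + r) with hIdef
  set Q : Set (Fin n → ℝ) := Set.univ.pi fun _ => Set.Ioo (-a) a with hQdef
  set G1 : Set (EuclideanSpace ℝ (Fin (n+1))) :=
    {z | z 0 ∈ I ∧ ∀ i, i ≠ 0 → |z i| < a} with hG1def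
  have mcoord : ∀ i : Fin (n+1), Measurable fun x : EuclideanSpace ℝ (Fin (n+1)) => x i :=
    fun i => (measurable_pi_apply i).comp (WithLp.measurable_ofLp 2 _)
  have mG : MeasurableSet G := by
    rw [hG, show {z : EuclideanSpace ℝ (Fin (n+1)) | ∀ i : Fin (n+1), i ≠ 0 → |z i| < a}
        = ⋂ i ∈ {i : Fin (n+1) | i ≠ 0}, {z : EuclideanSpace ℝ (Fin (n+1)) | |z i| < a} by
      ext z; simp]
    exact MeasurableSet.biInter (Set.to_countable _)
      (fun i _ => measurableSet_lt ((mcoord i).abs) measurable_const)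
  have hG1G : G1 = ((fun z : EuclideanSpace ℝ (Fin (n+1)) => z 0) ⁻¹' I) ∩ G := by
    rw [hG]; rfl
  have mI : MeasurableSet I := measurableSet_Icc
  have mQ : MeasurableSet Q := MeasurableSet.univ_pi fun _ => measurableSet_Ioo
  have mG1 : MeasurableSet G1 := by rw [hG1G]; exact ((mcoord 0) mI).inter mG
  set gR : EuclideanSpace ℝ (Fin (n+1)) → ℝ := G1.indicator fun _ => U with hgRdef
  have mgR : Measurable gR := measurable_const.indicator mG1
  have hT : MeasurePreserving
      (fun x : EuclideanSpace ℝ (Fin (n+1)) => ((x 0, fun j => x j.succ) : ℝ × (Fin n → ℝ)))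
      volume volume :=
    (volume_preserving_piFinSuccAbove (fun _ => ℝ) 0).comp
      (EuclideanSpace.volume_preserving_symm_measurableEquiv_toLp _)
  have transfer : ∀ F : ℝ × (Fin n → ℝ) → ENNReal, Measurable F →
      ∫⁻ x : EuclideanSpace ℝ (Fin (n+1)), F (x 0, fun j => x j.succ) = ∫⁻ p, F p :=
    fun F hF => hT.lintegral_comp hF
  have hmemG : ∀ x : EuclideanSpace ℝ (Fin (n+1)), x ∈ G ↔ (fun j => x j.succ) ∈ Q := by
    intro x
    rw [hG]
    simp only [Set.mem_setOf_eq, hQdef, Set.mem_pi, Set.mem_univ, Set.mem_Ioo, true_implies]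
    constructor
    · intro h j
      exact abs_lt.mp (h j.succ (Fin.succ_ne_zero j))
    · intro h i hi
      obtain ⟨j, rfl⟩ : ∃ j : Fin n, i = j.succ := ⟨i.pred hi, (Fin.succ_pred i hi).symm⟩
      exact abs_lt.mpr (h j)
  have hmemG1 : ∀ x : EuclideanSpace ℝ (Fin (n+1)), x ∈ G1 ↔ (x 0 ∈ I ∧ x ∈ G) := by
    intro x; rw [hG1G]; simp [Set.mem_inter_iff]
  have hVolI : volume I = ENNReal.ofReal (2 * r) := by
    rw [hIdef, Real.volume_Icc]; congr 1; ring
  have hVolQ : volume Q = ENNReal.ofReal (2 * a) ^ n := by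
    rw [hQdef, volume_pi_pi]
    simp only [Real.volume_Ioo, Finset.prod_const, Finset.card_univ, Fintype.card_fin]
    congr 2
    ring
  have hprod : ∀ F1 : ℝ → ENNReal, Measurable F1 →
      (∫⁻ p : ℝ × (Fin n → ℝ), F1 p.1 * Q.indicator (fun _ => (1:ENNReal)) p.2) =
        (∫⁻ t, F1 t) * volume Q := by
    intro F1 hF1
    rw [Measure.volume_eq_prod, lintegral_prod_mul hF1.aemeasurable
      ((measurable_const.indicator mQ).aemeasurable)]
    rw [lintegral_indicator_const mQ, one_mul]
  -- pointwise product form for the mass of gR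
  have e_g : ∀ x : EuclideanSpace ℝ (Fin (n+1)),
      G.indicator (fun y => ENNReal.ofReal (gR y)) x =
        (I.indicator (fun _ => ENNReal.ofReal U) (x 0)) *
          (Q.indicator (fun _ => (1:ENNReal)) (fun j => x j.succ)) := by
    intro x
    by_cases hx : x ∈ G
    · rw [Set.indicator_of_mem hx, Set.indicator_of_mem ((hmemG x).1 hx), mul_one]
      by_cases hx1 : x 0 ∈ I
      · rw [Set.indicator_of_mem hx1, hgRdef, Set.indicator_of_mem ((hmemG1 x).2 ⟨hx1, hx⟩)]
      · rw [Set.indicator_of_notMem hx1, hgRdef,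
          Set.indicator_of_notMem (fun c => hx1 ((hmemG1 x).1 c).1)]
        simp
    · rw [Set.indicator_of_notMem hx,
        Set.indicator_of_notMem (fun c => hx ((hmemG x).2 c)), mul_zero]
  have e_phig : ∀ x : EuclideanSpace ℝ (Fin (n+1)),
      G.indicator (fun y => ENNReal.ofReal ((y 0 - b) ^ 2 * gR y)) x =
        (I.indicator (fun t => ENNReal.ofReal ((t - b) ^ 2 * U)) (x 0)) *
          (Q.indicator (fun _ => (1:ENNReal)) (fun j => x j.succ)) := by
    intro x
    by_cases hx : x ∈ G
    · rw [Set.indicator_of_mem hx, Set.indicator_of_mem ((hmemG x).1 hx), mul_one]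
      by_cases hx1 : x 0 ∈ I
      · rw [Set.indicator_of_mem hx1, hgRdef, Set.indicator_of_mem ((hmemG1 x).2 ⟨hx1, hx⟩)]
      · rw [Set.indicator_of_notMem hx1, hgRdef,
          Set.indicator_of_notMem (fun c => hx1 ((hmemG1 x).1 c).1)]
        simp
    · rw [Set.indicator_of_notMem hx,
        Set.indicator_of_notMem (fun c => hx ((hmemG x).2 c)), mul_zero]
  have hg1 : ∫⁻ x in G, ENNReal.ofReal (gR x) = ENNReal.ofReal E := by
    rw [← lintegral_indicator mG]
    calc ∫⁻ x, G.indicator (fun y => ENNReal.ofReal (gR y)) x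
        = ∫⁻ x : EuclideanSpace ℝ (Fin (n+1)),
            (fun p : ℝ × (Fin n → ℝ) => (I.indicator (fun _ => ENNReal.ofReal U) p.1) *
              (Q.indicator (fun _ => (1:ENNReal)) p.2)) (x 0, fun j => x j.succ) :=
          lintegral_congr e_g
      _ = ∫⁻ p : ℝ × (Fin n → ℝ), (I.indicator (fun _ => ENNReal.ofReal U) p.1) *
              (Q.indicator (fun _ => (1:ENNReal)) p.2) :=
          transfer _ (((measurable_const.indicator mI).comp measurable_fst).mul
            ((measurable_const.indicator mQ).comp measurable_snd))
      _ = (∫⁻ t, I.indicator (fun _ => ENNReal.ofReal U) t) * volume Q :=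
          hprod _ (measurable_const.indicator mI)
      _ = ENNReal.ofReal U * ENNReal.ofReal (2 * r) * ENNReal.ofReal (2 * a) ^ n := by
          rw [lintegral_indicator_const mI, hVolI, hVolQ]
      _ = ENNReal.ofReal (U * (2 * r) * P) := by
          rw [← ENNReal.ofReal_pow (by linarith), ← ENNReal.ofReal_mul hU.le,
            ← ENNReal.ofReal_mul (by positivity)]
      _ = ENNReal.ofReal E := by
          congr 1
          rw [hrdef]
          field_simp
  have hB : ∫⁻ x in G, ENNReal.ofReal ((x 0 - b) ^ 2 * gR x) =
      ENNReal.ofReal (E ^ 3 / (12 * U ^ 2 * (2 * a) ^ (2 * n))) := by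
    rw [← lintegral_indicator mG]
    have mphiU : Measurable fun t : ℝ => ENNReal.ofReal ((t - b) ^ 2 * U) :=
      (((measurable_id.sub measurable_const).pow_const 2).mul measurable_const).ennreal_ofReal
    calc ∫⁻ x, G.indicator (fun y => ENNReal.ofReal ((y 0 - b) ^ 2 * gR y)) x
        = ∫⁻ x : EuclideanSpace ℝ (Fin (n+1)),
            (fun p : ℝ × (Fin n → ℝ) => (I.indicator (fun t => ENNReal.ofReal ((t - b) ^ 2 * U)) p.1) *
              (Q.indicator (fun _ => (1:ENNReal)) p.2)) (x 0, fun j => x j.succ) :=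
          lintegral_congr e_phig
      _ = ∫⁻ p : ℝ × (Fin n → ℝ), (I.indicator (fun t => ENNReal.ofReal ((t - b) ^ 2 * U)) p.1) *
              (Q.indicator (fun _ => (1:ENNReal)) p.2) :=
          transfer _ ((((mphiU).indicator mI).comp measurable_fst).mul
            ((measurable_const.indicator mQ).comp measurable_snd))
      _ = (∫⁻ t, I.indicator (fun t => ENNReal.ofReal ((t - b) ^ 2 * U)) t) * volume Q :=
          hprod _ (mphiU.indicator mI)
      _ = (∫⁻ t in I, ENNReal.ofReal ((t - b) ^ 2) * ENNReal.ofReal U) * volume Q := by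
          rw [lintegral_indicator mI]
          congr 1
          refine lintegral_congr fun t => ?_
          rw [ENNReal.ofReal_mul (sq_nonneg _)]
      _ = ENNReal.ofReal (2 / 3 * r ^ 3) * ENNReal.ofReal U * ENNReal.ofReal (2 * a) ^ n := by
          rw [lintegral_mul_const _ (show Measurable fun t : ℝ => ENNReal.ofReal ((t - b) ^ 2) from ((measurable_id.sub measurable_const).pow_const 2).ennreal_ofReal),
            hIdef, moment1d b r hr.le, hVolQ]
      _ = ENNReal.ofReal (2 / 3 * r ^ 3 * U * P) := by
          rw [← ENNReal.ofReal_pow (by linarith), ← ENNReal.ofReal_mul (by positivity),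
            ← ENNReal.ofReal_mul (by positivity)]
      _ = ENNReal.ofReal (E ^ 3 / (12 * U ^ 2 * (2 * a) ^ (2 * n))) := by
          congr 1
          rw [show (2*a : ℝ) ^ (2 * n) = P ^ 2 by rw [hPdef, ← pow_mul, mul_comm 2 n], hrdef]
          field_simp
          ring

  have hfm : Measurable fun x : EuclideanSpace ℝ (Fin (n+1)) => ENNReal.ofReal (f x) :=
    hf.ennreal_ofReal
  have mphif : Measurable fun x : EuclideanSpace ℝ (Fin (n+1)) =>
      ENNReal.ofReal ((x 0 - b) ^ 2 * f x) :=
    ((((mcoord 0).sub measurable_const).pow_const 2).mul hf).ennreal_ofReal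
  have mphig : Measurable fun x : EuclideanSpace ℝ (Fin (n+1)) =>
      ENNReal.ofReal ((x 0 - b) ^ 2 * gR x) :=
    ((((mcoord 0).sub measurable_const).pow_const 2).mul mgR).ennreal_ofReal
  have mg : Measurable fun x : EuclideanSpace ℝ (Fin (n+1)) => ENNReal.ofReal (gR x) :=
    mgR.ennreal_ofReal
  have hgnn : ∀ x : EuclideanSpace ℝ (Fin (n+1)), 0 ≤ gR x := fun x =>
    Set.indicator_nonneg (fun _ _ => hU.le) x
  have key : ∀ x ∈ G, (x 0 - b) ^ 2 * gR x + r ^ 2 * f x ≤ (x 0 - b) ^ 2 * f x + r ^ 2 * gR x := by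
    intro x hx
    by_cases hx1 : x 0 ∈ I
    · have hgu : gR x = U := Set.indicator_of_mem ((hmemG1 x).2 ⟨hx1, hx⟩) _
      obtain ⟨h2, h3⟩ := hx1
      have h1 : (x 0 - b) ^ 2 ≤ r ^ 2 := by nlinarith
      rw [hgu]
      nlinarith [hfU x hx]
    · have hg0 : gR x = 0 := Set.indicator_of_notMem (fun c => hx1 ((hmemG1 x).1 c).1) _
      have h1 : r ^ 2 ≤ (x 0 - b) ^ 2 := by
        have hx1' := hx1
        rw [hIdef, Set.mem_Icc, not_and_or, not_le, not_le] at hx1'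
        rcases hx1' with h | h <;> nlinarith
      rw [hg0]
      nlinarith [hf0 x hx]
  have keyE : ∀ x ∈ G,
      ENNReal.ofReal ((x 0 - b) ^ 2 * gR x) + ENNReal.ofReal (r ^ 2) * ENNReal.ofReal (f x)
        ≤ ENNReal.ofReal ((x 0 - b) ^ 2 * f x) + ENNReal.ofReal (r ^ 2) * ENNReal.ofReal (gR x) := by
    intro x hx
    rw [← ENNReal.ofReal_mul (sq_nonneg r), ← ENNReal.ofReal_mul (sq_nonneg r),
      ← ENNReal.ofReal_add (mul_nonneg (sq_nonneg _) (hgnn x))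
        (mul_nonneg (sq_nonneg _) (hf0 x hx)),
      ← ENNReal.ofReal_add (mul_nonneg (sq_nonneg _) (hf0 x hx))
        (mul_nonneg (sq_nonneg _) (hgnn x))]
    exact ENNReal.ofReal_le_ofReal (key x hx)
  have expand1 : (∫⁻ x in G, (ENNReal.ofReal ((x 0 - b) ^ 2 * gR x)
        + ENNReal.ofReal (r ^ 2) * ENNReal.ofReal (f x)) ∂volume)
      = ENNReal.ofReal (E ^ 3 / (12 * U ^ 2 * (2 * a) ^ (2 * n)))
        + ENNReal.ofReal (r ^ 2) * ENNReal.ofReal E := by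
    rw [lintegral_add_left mphig, lintegral_const_mul _ hfm, hmass, hB]
  have expand2 : (∫⁻ x in G, (ENNReal.ofReal ((x 0 - b) ^ 2 * f x)
        + ENNReal.ofReal (r ^ 2) * ENNReal.ofReal (gR x)) ∂volume)
      = (∫⁻ x in G, ENNReal.ofReal ((x 0 - b) ^ 2 * f x) ∂volume)
        + ENNReal.ofReal (r ^ 2) * ENNReal.ofReal E := by
    rw [lintegral_add_left mphif, lintegral_const_mul _ mg, hg1]
  have hMfin : ENNReal.ofReal (r ^ 2) * ENNReal.ofReal E ≠ ⊤ :=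
    ENNReal.mul_ne_top ENNReal.ofReal_ne_top ENNReal.ofReal_ne_top
  have mono := setLIntegral_mono (μ := volume) (s := G)
    (mphif.add (measurable_const.mul mg)) keyE
  simp only [Pi.add_apply, Pi.mul_apply] at mono
  rw [expand1, expand2] at mono
  have part1 := (ENNReal.add_le_add_iff_right hMfin).mp mono
  refine ⟨part1, fun hA => ?_, fun hae => ?_⟩
  · -- equality implies f = gR a.e.
    replace hA : (∫⁻ x in G, ENNReal.ofReal ((x 0 - b) ^ 2 * f x) ∂volume)
        = ENNReal.ofReal (E ^ 3 / (12 * U ^ 2 * (2 * a) ^ (2 * n))) := hA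
    have hlee : ∀ᵐ x ∂volume.restrict G,
        ENNReal.ofReal ((x 0 - b) ^ 2 * gR x) + ENNReal.ofReal (r ^ 2) * ENNReal.ofReal (f x)
          ≤ ENNReal.ofReal ((x 0 - b) ^ 2 * f x)
            + ENNReal.ofReal (r ^ 2) * ENNReal.ofReal (gR x) :=
      (ae_restrict_iff' mG).mpr (ae_of_all _ keyE)
    have hsfin : (∫⁻ x in G, (ENNReal.ofReal ((x 0 - b) ^ 2 * gR x)
        + ENNReal.ofReal (r ^ 2) * ENNReal.ofReal (f x)) ∂volume) ≠ ⊤ := by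
      rw [expand1]
      exact ENNReal.add_ne_top.mpr ⟨ENNReal.ofReal_ne_top, hMfin⟩
    have hsub0 : (∫⁻ x in G,
        ((ENNReal.ofReal ((x 0 - b) ^ 2 * f x) + ENNReal.ofReal (r ^ 2) * ENNReal.ofReal (gR x))
          - (ENNReal.ofReal ((x 0 - b) ^ 2 * gR x)
            + ENNReal.ofReal (r ^ 2) * ENNReal.ofReal (f x))) ∂volume) = 0 := by
      rw [lintegral_sub (show Measurable fun x : EuclideanSpace ℝ (Fin (n+1)) => ENNReal.ofReal ((x 0 - b) ^ 2 * gR x) + ENNReal.ofReal (r ^ 2) * ENNReal.ofReal (f x) from mphig.add (measurable_const.mul hfm)) hsfin hlee, expand1, expand2, hA,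
        tsub_self]
    have hae0 := (lintegral_eq_zero_iff
      ((mphif.add (measurable_const.mul mg)).sub (mphig.add (measurable_const.mul hfm)))).mp hsub0
    have hnull : ∀ c : ℝ, volume {x : EuclideanSpace ℝ (Fin (n+1)) | x 0 = c} = 0 := by
      intro c
      have hpre : {x : EuclideanSpace ℝ (Fin (n+1)) | x 0 = c} =
          (fun x : EuclideanSpace ℝ (Fin (n+1)) =>
            ((x 0, fun j => x j.succ) : ℝ × (Fin n → ℝ))) ⁻¹' ({c} ×ˢ Set.univ) := by
        ext x
        simp only [Set.mem_setOf_eq, Set.mem_preimage, Set.mem_prod, Set.mem_singleton_iff,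
          Set.mem_univ, and_true]
      rw [hpre, hT.measure_preimage
        (((measurableSet_singleton c).prod MeasurableSet.univ).nullMeasurableSet),
        Measure.volume_eq_prod, Measure.prod_prod, Real.volume_singleton, zero_mul]
    have hne : ∀ c : ℝ, ∀ᵐ x ∂volume.restrict G, x 0 ≠ c := by
      intro c
      have hms : MeasurableSet {x : EuclideanSpace ℝ (Fin (n+1)) | x 0 = c} :=
        (mcoord 0) (measurableSet_singleton c)
      simp only [ae_iff, not_not]
      rw [Measure.restrict_apply hms]
      exact measure_mono_null Set.inter_subset_left (hnull c)
    filter_upwards [hae0, hlee, ae_restrict_mem mG, hne (b + r), hne (b - r)]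
      with x hx0 hxle hxG hne1 hne2
    have hxeq : ENNReal.ofReal ((x 0 - b) ^ 2 * f x)
          + ENNReal.ofReal (r ^ 2) * ENNReal.ofReal (gR x)
        = ENNReal.ofReal ((x 0 - b) ^ 2 * gR x)
          + ENNReal.ofReal (r ^ 2) * ENNReal.ofReal (f x) := by
      have h1 := tsub_eq_zero_iff_le.mp (show ENNReal.ofReal ((x 0 - b) ^ 2 * f x) + ENNReal.ofReal (r ^ 2) * ENNReal.ofReal (gR x) - (ENNReal.ofReal ((x 0 - b) ^ 2 * gR x) + ENNReal.ofReal (r ^ 2) * ENNReal.ofReal (f x)) = 0 by simpa only [Pi.add_apply, Pi.mul_apply, Pi.sub_apply, Pi.zero_apply] using hx0)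
      exact le_antisymm h1 hxle
    rw [← ENNReal.ofReal_mul (sq_nonneg r), ← ENNReal.ofReal_mul (sq_nonneg r),
      ← ENNReal.ofReal_add (mul_nonneg (sq_nonneg _) (hf0 x hxG))
        (mul_nonneg (sq_nonneg _) (hgnn x)),
      ← ENNReal.ofReal_add (mul_nonneg (sq_nonneg _) (hgnn x))
        (mul_nonneg (sq_nonneg _) (hf0 x hxG))] at hxeq
    have hreal : (x 0 - b) ^ 2 * f x + r ^ 2 * gR x = (x 0 - b) ^ 2 * gR x + r ^ 2 * f x :=
      (ENNReal.ofReal_eq_ofReal_iff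
        (add_nonneg (mul_nonneg (sq_nonneg _) (hf0 x hxG)) (mul_nonneg (sq_nonneg _) (hgnn x)))
        (add_nonneg (mul_nonneg (sq_nonneg _) (hgnn x))
          (mul_nonneg (sq_nonneg _) (hf0 x hxG)))).mp hxeq
    have hphi : (x 0 - b) ^ 2 ≠ r ^ 2 := by
      intro hcontra
      rcases mul_eq_zero.mp (show (x 0 - b - r) * (x 0 - b + r) = 0 by linear_combination hcontra) with h | h
      · exact hne1 (by linarith)
      · exact hne2 (by linarith)
    have hz : ((x 0 - b) ^ 2 - r ^ 2) * (f x - gR x) = 0 := by linear_combination hreal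
    have hfg := (mul_eq_zero.mp hz).resolve_left (sub_ne_zero_of_ne hphi)
    have : f x = gR x := sub_eq_zero.mp hfg
    exact this
  · -- f = gR a.e. implies equality
    have hae' : f =ᵐ[volume.restrict G] gR := hae
    have hgoal : (∫⁻ x in G, ENNReal.ofReal ((x 0 - b) ^ 2 * f x) ∂volume)
        = ENNReal.ofReal (E ^ 3 / (12 * U ^ 2 * (2 * a) ^ (2 * n))) := by
      refine Eq.trans (lintegral_congr_ae ?_) hB
      filter_upwards [hae'] with x hx
      rw [hx]
    exact hgoal
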